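/- Let A_cl be an n×n real matrix, K an m×n real matrix, and let Q, R, P₀, W₀ be real matrices (Q, P₀, W₀ of size n×n, R of size m×m) such that: A_clᵀ P₀ + P₀ A_cl + Q + Kᵀ R K = 0; A_cl W₀ + W₀ A_clᵀ + I_n = 0; W₀ is positive semidefinite; R is positive semidefinite; and Q − q·I_n is positive semidefinite for some real q > 0. Then the L2 operator norm of W₀ satisfies ‖W₀‖ ≤ tr(P₀)/q. -/

import Mathlib

open Matrix
open scoped Matrix.Norms.L2Operator

private lemma psd_trace_nonneg {n : ℕ} {M : Matrix (Fin n) (Fin n) ℝ}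
    (hM : M.PosSemidef) : 0 ≤ M.trace := by
  rw [Matrix.trace]
  apply Finset.sum_nonneg
  intro i _
  exact hM.diag_nonneg

private lemma psd_trace_mul_nonneg {n : ℕ} {S W : Matrix (Fin n) (Fin n) ℝ}
    (hS : S.PosSemidef) (hW : W.PosSemidef) : 0 ≤ (S * W).trace := by
  obtain ⟨B, rfl⟩ : ∃ B : Matrix (Fin n) (Fin n) ℝ, W = Bᴴ * B := by
    open scoped MatrixOrder in exact CStarAlgebra.nonneg_iff_eq_star_mul_self.mp hW.nonneg
  have h : (S * (Bᴴ * B)).trace = (B * S * Bᴴ).trace := by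
    rw [← Matrix.trace_mul_cycle]
    rw [Matrix.mul_assoc]
  rw [h]
  exact psd_trace_nonneg (hS.mul_mul_conjTranspose_same B)

private lemma opNorm_le_sqrt_sum_sq {n : ℕ} (B : Matrix (Fin n) (Fin n) ℝ) :
    ‖B‖ ≤ Real.sqrt (∑ i, ∑ j, B i j ^ 2) := by
  have hs : (0:ℝ) ≤ ∑ i, ∑ j, B i j ^ 2 :=
    Finset.sum_nonneg fun i _ => Finset.sum_nonneg fun j _ => sq_nonneg _
  rw [Matrix.l2_opNorm_def]
  apply ContinuousLinearMap.opNorm_le_bound _ (Real.sqrt_nonneg _)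
  intro x
  have hx : (0:ℝ) ≤ ∑ j, x j ^ 2 := Finset.sum_nonneg fun j _ => sq_nonneg _
  have hnorm : ‖((Matrix.toEuclideanLin.trans LinearMap.toContinuousLinearMap) B) x‖
      = Real.sqrt (∑ i, (B.mulVec x i) ^ 2) := by
    rw [LinearEquiv.trans_apply, LinearMap.coe_toContinuousLinearMap']
    rw [EuclideanSpace.norm_eq]
    congr 1
    refine Finset.sum_congr rfl fun i _ => ?_
    rw [Real.norm_eq_abs, sq_abs]
    rfl
  rw [hnorm]
  have hxnorm : ‖x‖ = Real.sqrt (∑ j, x j ^ 2) := by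
    rw [EuclideanSpace.norm_eq]
    congr 1
    exact Finset.sum_congr rfl fun j _ => by rw [Real.norm_eq_abs, sq_abs]
  rw [hxnorm, ← Real.sqrt_mul hs]
  apply Real.sqrt_le_sqrt
  calc ∑ i, (B.mulVec x i) ^ 2
      ≤ ∑ i, (∑ j, B i j ^ 2) * (∑ j, x j ^ 2) := by
        apply Finset.sum_le_sum
        intro i _
        have := Finset.sum_mul_sq_le_sq_mul_sq Finset.univ (fun j => B i j) (fun j => x j)
        simpa [Matrix.mulVec, dotProduct, sq] using this
    _ = (∑ i, ∑ j, B i j ^ 2) * (∑ j, x j ^ 2) := by rw [Finset.sum_mul]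

private lemma psd_norm_le_trace {n : ℕ} {W : Matrix (Fin n) (Fin n) ℝ}
    (hW : W.PosSemidef) : ‖W‖ ≤ W.trace := by
  obtain ⟨B, rfl⟩ : ∃ B : Matrix (Fin n) (Fin n) ℝ, W = Bᴴ * B := by
    open scoped MatrixOrder in exact CStarAlgebra.nonneg_iff_eq_star_mul_self.mp hW.nonneg
  have htr : (Bᴴ * B).trace = ∑ i, ∑ j, B i j ^ 2 := by
    simp [Matrix.trace, Matrix.diag, Matrix.mul_apply, Matrix.conjTranspose_apply, sq]
    rw [Finset.sum_comm]
  have hs : (0:ℝ) ≤ ∑ i, ∑ j, B i j ^ 2 :=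
    Finset.sum_nonneg fun i _ => Finset.sum_nonneg fun j _ => sq_nonneg _
  have h1 : ‖Bᴴ * B‖ = ‖B‖ * ‖B‖ := Matrix.l2_opNorm_conjTranspose_mul_self B
  rw [h1, htr]
  calc ‖B‖ * ‖B‖ ≤ Real.sqrt (∑ i, ∑ j, B i j ^ 2) * Real.sqrt (∑ i, ∑ j, B i j ^ 2) :=
        mul_le_mul (opNorm_le_sqrt_sum_sq B) (opNorm_le_sqrt_sum_sq B)
          (norm_nonneg _) (Real.sqrt_nonneg _)
    _ = ∑ i, ∑ j, B i j ^ 2 := Real.mul_self_sqrt hs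

/-- Bound on the closed-loop Gramian: `‖W₀‖ ≤ tr(P₀)/q` where `q ≤ σ_min(Q)`. -/
theorem gramian_norm_bound {n m : ℕ}
    (Acl : Matrix (Fin n) (Fin n) ℝ) (K : Matrix (Fin m) (Fin n) ℝ)
    (Q P₀ W₀ : Matrix (Fin n) (Fin n) ℝ) (R : Matrix (Fin m) (Fin m) ℝ)
    (q : ℝ) (hq : 0 < q)
    (hP₀ : Aclᵀ * P₀ + P₀ * Acl + Q + Kᵀ * R * K = 0)
    (hW₀ : Acl * W₀ + W₀ * Aclᵀ + 1 = 0)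
    (hW₀psd : W₀.PosSemidef) (hRpsd : R.PosSemidef)
    (hQq : (Q - q • (1 : Matrix (Fin n) (Fin n) ℝ)).PosSemidef) :
    ‖W₀‖ ≤ P₀.trace / q := by
  -- Key trace identity: tr(P₀) = tr(Q W₀) + tr(KᵀRK W₀)
  have hone : (1 : Matrix (Fin n) (Fin n) ℝ) = -(Acl * W₀ + W₀ * Aclᵀ) :=
    eq_neg_of_add_eq_zero_right hW₀
  have htrP : P₀.trace = (Q * W₀).trace + ((Kᵀ * R * K) * W₀).trace := by
    have h1 : P₀.trace = (P₀ * (1 : Matrix (Fin n) (Fin n) ℝ)).trace := by rw [mul_one]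
    have h2 : (P₀ * (1 : Matrix (Fin n) (Fin n) ℝ)).trace
        = -(P₀ * Acl * W₀).trace - (P₀ * (W₀ * Aclᵀ)).trace := by
      rw [hone, Matrix.mul_neg, Matrix.mul_add, Matrix.trace_neg, Matrix.trace_add,
        ← Matrix.mul_assoc]
      ring
    have h3 : (P₀ * (W₀ * Aclᵀ)).trace = (Aclᵀ * P₀ * W₀).trace := by
      rw [← Matrix.mul_assoc, Matrix.trace_mul_cycle]
    have h4 : ((Aclᵀ * P₀ + P₀ * Acl + Q + Kᵀ * R * K) * W₀).trace = 0 := by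
      rw [hP₀, Matrix.zero_mul, Matrix.trace_zero]
    have hsum : Aclᵀ * P₀ * W₀ + P₀ * Acl * W₀ + Q * W₀ + (Kᵀ * R * K) * W₀ = 0 := by
      rw [← Matrix.add_mul, ← Matrix.add_mul, ← Matrix.add_mul, hP₀, Matrix.zero_mul]
    have h5 : (Aclᵀ * P₀ * W₀).trace + (P₀ * Acl * W₀).trace
        + (Q * W₀).trace + ((Kᵀ * R * K) * W₀).trace = 0 := by
      rw [← Matrix.trace_add, ← Matrix.trace_add, ← Matrix.trace_add, hsum, Matrix.trace_zero]
    rw [h1, h2, h3]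
    linarith
  -- nonnegativity of the K-term
  have hK : 0 ≤ ((Kᵀ * R * K) * W₀).trace := by
    have hpsd : (Kᵀ * R * K).PosSemidef := by
      have := hRpsd.conjTranspose_mul_mul_same K
      simpa [Matrix.conjTranspose_eq_transpose_of_trivial] using this
    exact psd_trace_mul_nonneg hpsd hW₀psd
  -- tr(Q W₀) ≥ q tr(W₀)
  have hQ : q * W₀.trace ≤ (Q * W₀).trace := by
    have h := psd_trace_mul_nonneg hQq hW₀psd
    have : ((Q - q • (1 : Matrix (Fin n) (Fin n) ℝ)) * W₀).trace
        = (Q * W₀).trace - q * W₀.trace := by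
      rw [Matrix.sub_mul, Matrix.trace_sub, Matrix.smul_mul, Matrix.one_mul,
        Matrix.trace_smul, smul_eq_mul]
    linarith [this ▸ h]
  have hnorm : ‖W₀‖ ≤ W₀.trace := psd_norm_le_trace hW₀psd
  have hfinal : q * ‖W₀‖ ≤ P₀.trace := by
    have : q * ‖W₀‖ ≤ q * W₀.trace := by
      exact mul_le_mul_of_nonneg_left hnorm hq.le
    linarith
  rw [le_div_iff₀ hq]
  linarith
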